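/- The chain-antichain principle restricted to ω-ordered posets implies the full chain-antichain principle: assume every infinite ω-ordered partial order on a subset of ℕ has an infinite chain or an infinite antichain. Then every infinite partial order on a subset of ℕ has an infinite chain or an infinite antichain. -/
import Mathlib


/-- A partial order (as a relation) on a set `P ⊆ ℕ`. -/
def IsPartialOrderOn (P : Set ℕ) (r : ℕ → ℕ → Prop) : Prop :=
  (∀ x ∈ P, r x x) ∧ (∀ x y, r x y → r y x → x = y) ∧
  (∀ x y z, r x y → r y z → r x z)

def IsChainIn (r : ℕ → ℕ → Prop) (X : Set ℕ) : Prop :=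
  ∀ x ∈ X, ∀ y ∈ X, r x y ∨ r y x

def IsAntichainIn (r : ℕ → ℕ → Prop) (X : Set ℕ) : Prop :=
  ∀ x ∈ X, ∀ y ∈ X, x ≠ y → ¬r x y ∧ ¬r y x

/-- CAC restricted to ω-ordered posets implies full CAC. -/
theorem stmt4
    (h : ∀ (P : Set ℕ) (r : ℕ → ℕ → Prop), IsPartialOrderOn P r → P.Infinite →
      (∀ x y, x ∈ P → y ∈ P → r x y → x ≤ y) →
      ∃ X ⊆ P, X.Infinite ∧ (IsChainIn r X ∨ IsAntichainIn r X)) :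
    ∀ (P : Set ℕ) (r : ℕ → ℕ → Prop), IsPartialOrderOn P r → P.Infinite →
      ∃ X ⊆ P, X.Infinite ∧ (IsChainIn r X ∨ IsAntichainIn r X) := by
  intro P r hpo hinf
  obtain ⟨hrefl, hanti, htrans⟩ := hpo
  -- First restrict r to the pairs compatible with ≤.
  set r' : ℕ → ℕ → Prop := fun x y => r x y ∧ x ≤ y with hr'
  have hpo' : IsPartialOrderOn P r' :=
    ⟨fun x hx => ⟨hrefl x hx, le_refl x⟩,
     fun x y hxy hyx => hanti x y hxy.1 hyx.1,
     fun x y z hxy hyz => ⟨htrans x y z hxy.1 hyz.1, le_trans hxy.2 hyz.2⟩⟩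
  obtain ⟨X, hXP, hXinf, hX⟩ := h P r' hpo' hinf (fun x y _ _ hxy => hxy.2)
  rcases hX with hchain | hantichain
  · exact ⟨X, hXP, hXinf, Or.inl (fun x hx y hy =>
      (hchain x hx y hy).imp (fun h => h.1) (fun h => h.1))⟩
  · -- On X, all r-relations go downward; use the reversed order.
    set s : ℕ → ℕ → Prop := fun x y => r y x with hs
    have hpos : IsPartialOrderOn X s :=
      ⟨fun x hx => hrefl x (hXP hx),
       fun x y hxy hyx => (hanti y x hxy hyx).symm,
       fun x y z hxy hyz => htrans z y x hyz hxy⟩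
    have hsω : ∀ x y, x ∈ X → y ∈ X → s x y → x ≤ y := by
      intro x y hx hy hxy
      by_cases hxe : x = y
      · exact le_of_eq hxe
      · have := (hantichain x hx y hy hxe).2
        have : ¬ y ≤ x := fun hle => this ⟨hxy, hle⟩
        exact le_of_not_ge this
    obtain ⟨Y, hYX, hYinf, hY⟩ := h X s hpos hXinf hsω
    refine ⟨Y, hYX.trans hXP, hYinf, ?_⟩
    rcases hY with hchain | hantichain'
    · exact Or.inl (fun x hx y hy => (hchain x hx y hy).symm)
    · exact Or.inr (fun x hx y hy hne => (hantichain' x hx y hy hne).symm)
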